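/- arXiv:2506.04080 — 2 statements merged into one kernel-verified Lean document; each statement's English description precedes it below -/
import Mathlib

section
/- Let α_1,…,α_n be pairwise distinct elements of a finite field F_q, let δ ∈ F_q, and let k, r be integers with 6 ≤ 2k ≤ n and 1 ≤ r ≤ k−1. If every k×k submatrix of G_2 is nonsingular (i.e. the code C_2 generated by G_2 is an [n+2,k] MDS code), then C_2 is not monomially equivalent to any GRS code of length n+2 over F_q; that is, C_2 is a non-GRS MDS code. -/
open Finset Matrix

/-- Elementary symmetric polynomial `σ_t` evaluated at the values `x 0, …, x (m-1)`. -/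
def esymmV {F : Type*} [CommRing F] {m : ℕ} (t : ℕ) (x : Fin m → F) : F :=
  ∑ A ∈ Finset.univ.powersetCard t, ∏ i ∈ A, x i

/-- Complete homogeneous symmetric polynomial `S_t` evaluated at `x 0, …, x (m-1)`. -/
def hsymmV {F : Type*} [CommRing F] {m : ℕ} (t : ℕ) (x : Fin m → F) : F :=
  ∑ d ∈ Finset.Nat.antidiagonalTuple m t, ∏ i, x i ^ d i

/-- The exponent of the `i`-th row (0-indexed): the elements of
`{0,…,k−r−1} ∪ {k−r+1,…,k}` in increasing order. -/
def expo (k r : ℕ) (i : Fin k) : ℕ := if (i : ℕ) < k - r then (i : ℕ) else (i : ℕ) + 1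

/-- The Vandermonde product `∏_{i<j} (α_j − α_i)`. -/
def vand {F : Type*} [CommRing F] {n : ℕ} (α : Fin n → F) : F :=
  ∏ i : Fin n, ∏ j ∈ Finset.Ioi i, (α j - α i)

/-- The matrix `G_{r,k}`: rows are `(α_1^e, …, α_n^e)` for
`e ∈ {0,…,k−r−1} ∪ {k−r+1,…,k}` in increasing order. -/
def Grk {F : Type*} [Field F] {n : ℕ} (α : Fin n → F) (k r : ℕ) : Matrix (Fin k) (Fin n) F :=
  Matrix.of fun i j => α j ^ expo k r i

/-- The matrix `G_1`: `G_{r,k}` with the extra column `(0,…,0,1)ᵀ` appended. -/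
def G1 {F : Type*} [Field F] {n : ℕ} (α : Fin n → F) (k r : ℕ) :
    Matrix (Fin k) (Fin (n + 1)) F :=
  Matrix.of fun i j =>
    if hj : (j : ℕ) < n then α ⟨j, hj⟩ ^ expo k r i
    else if (i : ℕ) = k - 1 then 1 else 0

/-- The matrix `G_2`: `G_1` with the extra column `(0,…,0,1,δ)ᵀ` appended
(entry `1` in row `k−1`, i.e. index `k−2`, and `δ` in row `k`, i.e. index `k−1`). -/
def G2 {F : Type*} [Field F] {n : ℕ} (α : Fin n → F) (k r : ℕ) (δ : F) :
    Matrix (Fin k) (Fin (n + 2)) F :=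
  Matrix.of fun i j =>
    if hj : (j : ℕ) < n then α ⟨j, hj⟩ ^ expo k r i
    else if (j : ℕ) = n then (if (i : ℕ) = k - 1 then 1 else 0)
    else (if (i : ℕ) = k - 2 then 1 else if (i : ℕ) = k - 1 then δ else 0)

/-- `u_i = ∏_{j ≠ i} (α_i − α_j)⁻¹`. -/
def uCoef {F : Type*} [Field F] {n : ℕ} (α : Fin n → F) (i : Fin n) : F :=
  ∏ j ∈ Finset.univ.erase i, (α i - α j)⁻¹

/-- `Λ_{r,i} = ∑_{j=0}^{r} (−1)^j σ_j α_i^{(n−k)+(r−1)−j}`. -/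
def Lam {F : Type*} [Field F] {n : ℕ} (α : Fin n → F) (k r : ℕ) (i : Fin n) : F :=
  ∑ j ∈ Finset.range (r + 1), (-1 : F) ^ j * esymmV j α * α i ^ ((n - k) + (r - 1) - j)

/-- Every `k×k` submatrix of `G` is nonsingular. -/
def allSubNonsing {F : Type*} [Field F] {k m : ℕ} (G : Matrix (Fin k) (Fin m) F) : Prop :=
  ∀ c : Fin k → Fin m, Function.Injective c → (G.submatrix id c).det ≠ 0

/-- The linear code spanned by the rows of `G`. -/
def rowSpan {F : Type*} [Field F] {k m : ℕ} (G : Matrix (Fin k) (Fin m) F) :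
    Submodule F (Fin m → F) :=
  Submodule.span F (Set.range fun i => G i)

/-- The dual code `C^⊥ = {x : ∑ x_i c_i = 0 for all c ∈ C}`, as a set. -/
def dualSet {F : Type*} [Field F] {m : ℕ} (C : Set (Fin m → F)) : Set (Fin m → F) :=
  {x | ∀ c ∈ C, ∑ i, x i * c i = 0}

/-- The extended code of `C` with respect to `w`. -/
def extCode {F : Type*} [Field F] {m : ℕ} (C : Set (Fin m → F)) (w : Fin m → F) :
    Set (Fin (m + 1) → F) :=
  {y | ∃ c ∈ C, (∀ i : Fin m, y (Fin.castSucc i) = c i) ∧ y (Fin.last m) = ∑ i, w i * c i}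

/-- `C` is a GRS code of length `m` and dimension `kk` over `F`:
evaluation points are pairwise distinct elements of `F ∪ {∞}` (with `∞ = none`),
the multipliers `v i` are nonzero, and `f(∞)` is the coefficient of `x^(kk−1)`. -/
def isGRS {F : Type*} [Field F] (m kk : ℕ) (C : Set (Fin m → F)) : Prop :=
  ∃ (β : Fin m → Option F) (v : Fin m → F),
    Function.Injective β ∧ (∀ i, v i ≠ 0) ∧
    C = {c | ∃ f : Polynomial F, f.degree < (kk : WithBot ℕ) ∧
      ∀ i, c i = v i * (match β i with
        | some x => Polynomial.eval x f
        | none => f.coeff (kk - 1))}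

/-- Monomial equivalence of codes. -/
def monEquiv {F : Type*} [Field F] {m : ℕ} (C C' : Set (Fin m → F)) : Prop :=
  ∃ (π : Equiv.Perm (Fin m)) (lam : Fin m → F),
    (∀ i, lam i ≠ 0) ∧ C' = {y | ∃ c ∈ C, ∀ i, y i = lam i * c (π i)}

section C2Aux

open Polynomial

variable {F : Type*} [Field F]

/-- Schur (coordinatewise) product set of a code. -/
def schurSet {m : ℕ} (C : Set (Fin m → F)) : Set (Fin m → F) :=
  {x | ∃ c ∈ C, ∃ d ∈ C, x = c * d}

lemma expo_lt_expo {k r : ℕ} {i j : Fin k} (h : (i : ℕ) < (j : ℕ)) :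
    expo k r i < expo k r j := by
  unfold expo; split <;> split <;> omega

lemma expo_le' {k r : ℕ} (i : Fin k) : expo k r i ≤ (i : ℕ) + 1 := by
  unfold expo; split <;> omega

lemma le_expo' {k r : ℕ} (i : Fin k) : (i : ℕ) ≤ expo k r i := by
  unfold expo; split <;> omega

lemma natDeg_of_degree_lt {f : F[X]} {kk : ℕ} (h : f.degree < (kk : WithBot ℕ)) (hk : 1 ≤ kk) :
    f.natDegree ≤ kk - 1 := by
  rcases eq_or_ne f 0 with rfl | hf
  · simp
  · have := (Polynomial.natDegree_lt_iff_degree_lt hf).2 h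
    omega

lemma finrank_span_range_le_card {m N : ℕ} (f : Fin N → (Fin m → F)) :
    Module.finrank F (Submodule.span F (Set.range f)) ≤ N := by
  have h1 : Module.finrank F (Submodule.span F (Set.range f)) ≤ Fintype.card (Fin N) :=
    finrank_range_le_card f
  simpa using h1

/-- Monomial equivalence preserves the dimension of the Schur square. -/
lemma schur_mon {m : ℕ} {C C' : Set (Fin m → F)} (h : monEquiv C C') :
    Module.finrank F (Submodule.span F (schurSet C)) =
      Module.finrank F (Submodule.span F (schurSet C')) := by
  obtain ⟨π, lam, hlam, hC'⟩ := h
  let Φ : (Fin m → F) →ₗ[F] (Fin m → F) :=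
    { toFun := fun x i => lam i ^ 2 * x (π i)
      map_add' := fun x y => by funext i; simp [mul_add]
      map_smul' := fun t x => by funext i; simp [smul_eq_mul]; ring }
  have hinj : Function.Injective Φ := by
    intro x y hxy
    funext i
    have h2 := congrFun hxy (π.symm i)
    simp only [Φ, LinearMap.coe_mk, AddHom.coe_mk, Equiv.apply_symm_apply] at h2
    exact mul_left_cancel₀ (pow_ne_zero 2 (hlam _)) h2
  have hset : schurSet C' = Φ '' schurSet C := by
    ext y
    constructor
    · rintro ⟨c1, hc1, c2, hc2, rfl⟩
      rw [hC'] at hc1 hc2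
      obtain ⟨d1, hd1, he1⟩ := hc1
      obtain ⟨d2, hd2, he2⟩ := hc2
      refine ⟨d1 * d2, ⟨d1, hd1, d2, hd2, rfl⟩, ?_⟩
      funext i
      simp only [Φ, LinearMap.coe_mk, AddHom.coe_mk, Pi.mul_apply, he1 i, he2 i]
      ring
    · rintro ⟨x, ⟨d1, hd1, d2, hd2, rfl⟩, rfl⟩
      refine ⟨fun i => lam i * d1 (π i), ?_, fun i => lam i * d2 (π i), ?_, ?_⟩
      · rw [hC']; exact ⟨d1, hd1, fun i => rfl⟩
      · rw [hC']; exact ⟨d2, hd2, fun i => rfl⟩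
      · funext i
        simp only [Φ, LinearMap.coe_mk, AddHom.coe_mk, Pi.mul_apply]
        ring
  rw [hset, Submodule.span_image]
  exact (LinearEquiv.finrank_eq (Submodule.equivMapOfInjective Φ hinj (Submodule.span F (schurSet C))))

/-- The Schur square of a GRS code of dimension `kk` has dimension at most `2kk-1`. -/
lemma grs_ub {m kk : ℕ} (hkk : 2 ≤ kk) {C' : Set (Fin m → F)} (h : isGRS m kk C') :
    Module.finrank F (Submodule.span F (schurSet C')) ≤ 2 * kk - 1 := by
  classical
  obtain ⟨β, v, hβ, hv, hC⟩ := h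
  set gg : Fin (2 * kk - 1) → Fin m → F := fun t i =>
    v i ^ 2 * (match β i with
      | some x => x ^ (t : ℕ)
      | none => if (t : ℕ) = 2 * kk - 2 then 1 else 0) with hgg
  have key : schurSet C' ⊆ (Submodule.span F (Set.range gg) : Set (Fin m → F)) := by
    rintro y ⟨c1, hc1, c2, hc2, rfl⟩
    rw [hC] at hc1 hc2
    obtain ⟨f1, hdf1, hf1⟩ := hc1
    obtain ⟨f2, hdf2, hf2⟩ := hc2
    have hn1 : f1.natDegree ≤ kk - 1 := natDeg_of_degree_lt hdf1 (by omega)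
    have hn2 : f2.natDegree ≤ kk - 1 := natDeg_of_degree_lt hdf2 (by omega)
    have hnm : (f1 * f2).natDegree < 2 * kk - 1 :=
      lt_of_le_of_lt Polynomial.natDegree_mul_le (by omega)
    have hcoefftop : (f1 * f2).coeff (2 * kk - 2) = f1.coeff (kk - 1) * f2.coeff (kk - 1) := by
      rw [Polynomial.coeff_mul]
      rw [Finset.sum_eq_single ((kk - 1, kk - 1) : ℕ × ℕ)]
      · intro b hb hbne
        rw [Finset.HasAntidiagonal.mem_antidiagonal] at hb
        rcases lt_or_ge b.1 (kk - 1) with h' | h'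
        · rw [Polynomial.coeff_eq_zero_of_natDegree_lt (show f2.natDegree < b.2 by omega),
            mul_zero]
        · have hb1 : kk - 1 < b.1 := by
            rcases h'.lt_or_eq with h'' | h''
            · exact h''
            · exfalso; apply hbne; ext <;> omega
          rw [Polynomial.coeff_eq_zero_of_natDegree_lt (show f1.natDegree < b.1 by omega),
            zero_mul]
      · intro habs
        exact absurd (Finset.HasAntidiagonal.mem_antidiagonal.2 (by omega)) habs
    have hexp : c1 * c2 = ∑ t : Fin (2 * kk - 1), (f1 * f2).coeff (t : ℕ) • gg t := by
      funext i
      rw [Finset.sum_apply]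
      simp only [Pi.smul_apply, smul_eq_mul, Pi.mul_apply, hf1 i, hf2 i, hgg]
      cases hβi : β i with
      | some x =>
        simp only [hβi]
        have hev : (f1 * f2).eval x = ∑ t ∈ Finset.range (2 * kk - 1), (f1 * f2).coeff t * x ^ t :=
          Polynomial.eval_eq_sum_range' hnm x
        rw [Fin.sum_univ_eq_sum_range (fun t => (f1 * f2).coeff t * (v i ^ 2 * x ^ t))]
        have : ∑ t ∈ Finset.range (2 * kk - 1), (f1 * f2).coeff t * (v i ^ 2 * x ^ t)
            = v i ^ 2 * ∑ t ∈ Finset.range (2 * kk - 1), (f1 * f2).coeff t * x ^ t := by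
          rw [Finset.mul_sum]; exact Finset.sum_congr rfl fun t _ => by ring
        rw [this, ← hev, Polynomial.eval_mul]
        ring
      | none =>
        simp only [hβi]
        rw [Finset.sum_eq_single (⟨2 * kk - 2, by omega⟩ : Fin (2 * kk - 1))]
        · simp only [hcoefftop]
          simp
          ring
        · intro b _ hbne
          rw [if_neg, mul_zero, mul_zero]
          intro hb
          exact hbne (Fin.ext hb)
        · intro habs
          exact absurd (Finset.mem_univ _) habs
    rw [hexp]
    exact Submodule.sum_mem _ fun t _ =>
      Submodule.smul_mem _ _ (Submodule.subset_span ⟨t, rfl⟩)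
  refine le_trans (Submodule.finrank_mono (Submodule.span_le.2 key)) ?_
  exact finrank_span_range_le_card gg

/-- A GRS code of dimension `kk ≤ m` contains `kk` linearly independent codewords. -/
lemma exists_indep_grs {m kk : ℕ} (hkk : 2 ≤ kk) (hkkm : kk ≤ m) {C' : Set (Fin m → F)}
    (h : isGRS m kk C') :
    ∃ ct : Fin kk → Fin m → F, (∀ t, ct t ∈ C') ∧ LinearIndependent F ct := by
  classical
  obtain ⟨β, v, hβ, hv, hC⟩ := h
  refine ⟨fun t i => v i * (match β i with
    | some x => x ^ (t : ℕ)
    | none => if (kk - 1 : ℕ) = (t : ℕ) then 1 else 0), ?_, ?_⟩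
  · intro t
    rw [hC]
    refine ⟨X ^ (t : ℕ), ?_, ?_⟩
    · rw [Polynomial.degree_X_pow]
      exact_mod_cast t.isLt
    · intro i
      cases hβi : β i with
      | some x => simp [hβi]
      | none => simp [hβi, Polynomial.coeff_X_pow]
  · rw [Fintype.linearIndependent_iff]
    intro u hu
    set f : F[X] := ∑ t : Fin kk, Polynomial.C (u t) * X ^ (t : ℕ) with hf
    have hfdeg : f.natDegree ≤ kk - 1 := by
      refine Polynomial.natDegree_sum_le_of_forall_le _ _ fun t _ => ?_
      refine le_trans (Polynomial.natDegree_C_mul_le _ _) ?_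
      rw [Polynomial.natDegree_X_pow]
      have := t.isLt; omega
    have hcoeff_f : ∀ (s : ℕ) (hs : s < kk), f.coeff s = u ⟨s, hs⟩ := by
      intro s hs
      rw [hf, Polynomial.finset_sum_coeff]
      rw [Finset.sum_eq_single (⟨s, hs⟩ : Fin kk)]
      · simp [Polynomial.coeff_C_mul, Polynomial.coeff_X_pow]
      · intro b _ hbne
        rw [Polynomial.coeff_C_mul, Polynomial.coeff_X_pow, if_neg, mul_zero]
        intro hb; exact hbne (Fin.ext hb.symm)
      · intro habs; exact absurd (Finset.mem_univ _) habs
    have hmain : ∀ i : Fin m,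
        v i * (match β i with
          | some x => f.eval x
          | none => f.coeff (kk - 1)) = 0 := by
      intro i
      have h0 := congrFun hu i
      rw [Finset.sum_apply] at h0
      simp only [Pi.smul_apply, smul_eq_mul, Pi.zero_apply] at h0
      rw [← h0]
      cases hβi : β i with
      | some x =>
        simp only [hβi]
        rw [hf, Polynomial.eval_finset_sum, Finset.mul_sum]
        refine (Finset.sum_congr rfl fun t _ => ?_).symm
        simp only [Polynomial.eval_mul, Polynomial.eval_C, Polynomial.eval_pow,
          Polynomial.eval_X]
        ring
      | none =>
        simp only [hβi]
        rw [hf, Polynomial.finset_sum_coeff, Finset.mul_sum]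
        refine (Finset.sum_congr rfl fun t _ => ?_).symm
        rw [Polynomial.coeff_C_mul, Polynomial.coeff_X_pow]
        ring
    have heval : ∀ (i : Fin m) (x : F), β i = some x → f.eval x = 0 := by
      intro i x hβi
      have := hmain i
      rw [hβi] at this
      exact (mul_eq_zero.1 this).resolve_left (hv i)
    have hf0 : f = 0 := by
      by_cases hnone : ∃ i0, β i0 = none
      · obtain ⟨i0, hi0⟩ := hnone
        have hc1 : f.coeff (kk - 1) = 0 := by
          have := hmain i0
          rw [hi0] at this
          exact (mul_eq_zero.1 this).resolve_left (hv i0)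
        have hdeg2 : f.natDegree ≤ kk - 2 := by
          rcases eq_or_ne f 0 with h0 | h0
          · simp [h0]
          · by_contra hgt
            push_neg at hgt
            have hnd : f.natDegree = kk - 1 := by omega
            exact (Polynomial.leadingCoeff_ne_zero.mpr h0)
              (by rw [Polynomial.leadingCoeff, hnd]; exact hc1)
        have hx : ∀ i : {i : Fin m // i ≠ i0}, ∃ x, β i.1 = some x := by
          rintro ⟨i, hi⟩
          cases hb : β i with
          | none => exact absurd (hβ (hb.trans hi0.symm)) hi
          | some x => exact ⟨x, rfl⟩
        set xf : {i : Fin m // i ≠ i0} → F := fun i => (hx i).choose with hxf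
        have hxspec : ∀ i, β i.1 = some (xf i) := fun i => (hx i).choose_spec
        have hxinj : Function.Injective xf := by
          intro i j hij
          have : β i.1 = β j.1 := by rw [hxspec i, hxspec j, hij]
          exact Subtype.ext (hβ this)
        have hcard : Fintype.card {i : Fin m // i ≠ i0} = m - 1 := by
          rw [Fintype.card_subtype_compl, Fintype.card_subtype_eq]
          simp
        refine Polynomial.eq_zero_of_natDegree_lt_card_of_eval_eq_zero f hxinj
          (fun i => heval i.1 (xf i) (hxspec i)) ?_
        rw [hcard]; omega
      · push_neg at hnone
        have hx : ∀ i : Fin m, ∃ x, β i = some x := by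
          intro i
          cases hb : β i with
          | none => exact absurd hb (hnone i)
          | some x => exact ⟨x, rfl⟩
        set xf : Fin m → F := fun i => (hx i).choose with hxf
        have hxspec : ∀ i, β i = some (xf i) := fun i => (hx i).choose_spec
        have hxinj : Function.Injective xf := by
          intro i j hij
          have : β i = β j := by rw [hxspec i, hxspec j, hij]
          exact hβ this
        refine Polynomial.eq_zero_of_natDegree_lt_card_of_eval_eq_zero f hxinj
          (fun i => heval i (xf i) (hxspec i)) ?_
        rw [Fintype.card_fin]; omega
    intro t
    have h9 := hcoeff_f (t : ℕ) t.isLt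
    rw [hf0, Polynomial.coeff_zero] at h9
    simpa using h9.symm

lemma coeff_aux {F : Type*} [Field F] {N : ℕ} (cf : Fin N → F) (E : Fin N → ℕ) (t : ℕ)
    (h : ∀ i, t ≠ E i) :
    (∑ i : Fin N, Polynomial.C (cf i) * Polynomial.X ^ (E i)).coeff t = 0 := by
  rw [Polynomial.finset_sum_coeff]
  refine Finset.sum_eq_zero fun i _ => ?_
  rw [Polynomial.coeff_C_mul, Polynomial.coeff_X_pow, if_neg (h i), mul_zero]

lemma coeff_aux2 {F : Type*} [Field F] {N : ℕ} (cf : Fin N → F) (E : Fin N → ℕ) (i0 : Fin N)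
    (hE : ∀ i, E i = E i0 → i = i0) :
    (∑ i : Fin N, Polynomial.C (cf i) * Polynomial.X ^ (E i)).coeff (E i0) = cf i0 := by
  rw [Polynomial.finset_sum_coeff]
  rw [Finset.sum_eq_single i0]
  · rw [Polynomial.coeff_C_mul, Polynomial.coeff_X_pow, if_pos rfl, mul_one]
  · intro b _ hbne
    rw [Polynomial.coeff_C_mul, Polynomial.coeff_X_pow, if_neg, mul_zero]
    intro hb
    exact hbne (hE b hb.symm)
  · intro habs
    exact absurd (Finset.mem_univ _) habs

/-- The Schur square of the row span of `G₂` has dimension at least `2k`. -/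
lemma schur_lb {n : ℕ} (α : Fin n → F) (hα : Function.Injective α) (δ : F) (k r : ℕ)
    (hk : 3 ≤ k) (hkn : 2 * k ≤ n) (hr1 : 1 ≤ r) (hrk : r ≤ k - 1) :
    2 * k ≤ Module.finrank F
      (Submodule.span F (schurSet ((rowSpan (G2 α k r δ) : Submodule F (Fin (n + 2) → F)) : Set (Fin (n + 2) → F)))) := by
  classical
  set CC : Set (Fin (n + 2) → F) :=
    ((rowSpan (G2 α k r δ) : Submodule F (Fin (n + 2) → F)) : Set (Fin (n + 2) → F)) with hCC
  set g : Fin k → Fin (n + 2) → F := fun i => G2 α k r δ i with hg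
  have hgmem : ∀ i, g i ∈ rowSpan (G2 α k r δ) := fun i => Submodule.subset_span ⟨i, rfl⟩
  -- special row indices
  have hk0 : 0 < k := by omega
  have hkm2 : k - 2 < k := by omega
  have hkm1 : k - 1 < k := by omega
  -- entry lemmas
  have hglt : ∀ (i : Fin k) (j : Fin n), g i ⟨(j : ℕ), by omega⟩ = α j ^ expo k r i := by
    intro i j
    show G2 α k r δ i ⟨(j : ℕ), by omega⟩ = α j ^ expo k r i
    rw [G2, Matrix.of_apply, dif_pos (show ((⟨(j : ℕ), by omega⟩ : Fin (n + 2)) : ℕ) < n from j.isLt)]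
  have hgn : ∀ i : Fin k, g i ⟨n, by omega⟩ = if (i : ℕ) = k - 1 then 1 else 0 := by
    intro i
    show G2 α k r δ i ⟨n, by omega⟩ = _
    rw [G2, Matrix.of_apply, dif_neg (by simp), if_pos rfl]
  have hgn1 : ∀ i : Fin k,
      g i ⟨n + 1, by omega⟩ = if (i : ℕ) = k - 2 then 1 else if (i : ℕ) = k - 1 then δ else 0 := by
    intro i
    show G2 α k r δ i ⟨n + 1, by omega⟩ = _
    rw [G2, Matrix.of_apply, dif_neg (by simp), if_neg (by simp)]
  -- exponents
  set a : ℕ := expo k r ⟨k - 2, hkm2⟩ with ha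
  set e : Fin (k - 2) → ℕ := fun i => expo k r ⟨(i : ℕ), by omega⟩ with he
  have hae : ∀ i, e i < a := by
    intro i
    rw [he, ha]
    exact expo_lt_expo (by simpa using i.isLt)
  have heub : ∀ i, e i ≤ k - 2 := by
    intro i
    rw [he]
    refine le_trans (expo_le' _) ?_
    have := i.isLt; simp
  have ha1 : k - 2 ≤ a := by
    rw [ha]; simpa using le_expo' (⟨k - 2, hkm2⟩ : Fin k)
  have ha2 : a ≤ k - 1 := by
    rw [ha]
    refine le_trans (expo_le' _) ?_
    simp; omega
  have hb : expo k r ⟨k - 1, hkm1⟩ = k := by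
    unfold expo
    rw [if_neg (by simp; omega)]
    simp; omega
  have hexpo0 : expo k r ⟨0, hk0⟩ = 0 := by
    unfold expo
    rw [if_pos (by simp; omega)]
  have heinj : ∀ i i' : Fin (k - 2), e i = e i' → i = i' := by
    intro i i' hee
    rw [he] at hee
    by_contra hne
    rcases lt_trichotomy (i : ℕ) (i' : ℕ) with h' | h' | h'
    · exact absurd hee (Nat.ne_of_lt (expo_lt_expo (by simpa using h')))
    · exact hne (Fin.ext h')
    · exact absurd hee.symm (Nat.ne_of_lt (expo_lt_expo (by simpa using h')))
  -- the 2k vectors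
  set A : Fin (k - 2) → Fin (n + 2) → F := fun i => g ⟨0, hk0⟩ * g ⟨(i : ℕ), by omega⟩ with hA
  set B : Fin (k - 2) → Fin (n + 2) → F := fun i => g ⟨k - 1, hkm1⟩ * g ⟨(i : ℕ), by omega⟩ with hB
  set D : Fin (n + 2) → F := g ⟨0, hk0⟩ * g ⟨k - 2, hkm2⟩ with hD
  set q1 : Fin (n + 2) → F := g ⟨k - 1, hkm1⟩ * g ⟨k - 1, hkm1⟩ with hq1
  set q2 : Fin (n + 2) → F := g ⟨k - 2, hkm2⟩ * g ⟨k - 2, hkm2⟩ with hq2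
  set q3 : Fin (n + 2) → F := g ⟨k - 2, hkm2⟩ * g ⟨k - 1, hkm1⟩ with hq3
  set w : Fin (n + 2) → F := q3 - δ • q2 with hw
  set ψ : (Fin (k - 2) ⊕ (Fin (k - 2) ⊕ Fin 4)) → Fin (n + 2) → F :=
    Sum.elim A (Sum.elim B ![D, w, q2, q1]) with hψ
  have hprod : ∀ i j : Fin k, g i * g j ∈ Submodule.span F (schurSet CC) :=
    fun i j => Submodule.subset_span ⟨g i, hgmem i, g j, hgmem j, rfl⟩
  have hmem : ∀ l, ψ l ∈ Submodule.span F (schurSet CC) := by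
    rintro (i | i | l)
    · exact hprod _ _
    · exact hprod _ _
    · fin_cases l
      · exact hprod _ _
      · exact Submodule.sub_mem _ (hprod _ _) (Submodule.smul_mem _ _ (hprod _ _))
      · exact hprod _ _
      · exact hprod _ _
  -- coordinate values
  have hval0 : g ⟨0, hk0⟩ ⟨n, by omega⟩ = 0 := by rw [hgn]; simp; omega
  have hval0' : g ⟨0, hk0⟩ ⟨n + 1, by omega⟩ = 0 := by
    rw [hgn1]
    rw [if_neg (by simp; omega), if_neg (by simp; omega)]
  have hvalK2 : g ⟨k - 2, hkm2⟩ ⟨n, by omega⟩ = 0 := by rw [hgn]; simp; omega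
  have hvalK2' : g ⟨k - 2, hkm2⟩ ⟨n + 1, by omega⟩ = 1 := by rw [hgn1]; simp
  have hvalK1 : g ⟨k - 1, hkm1⟩ ⟨n, by omega⟩ = 1 := by rw [hgn]; simp
  have hvalK1' : g ⟨k - 1, hkm1⟩ ⟨n + 1, by omega⟩ = δ := by rw [hgn1]; simp; omega
  have hvallow : ∀ i : Fin (k - 2), g ⟨(i : ℕ), by omega⟩ ⟨n, by omega⟩ = 0 := by
    intro i; rw [hgn]; have := i.isLt; simp; omega
  have hvallow' : ∀ i : Fin (k - 2), g ⟨(i : ℕ), by omega⟩ ⟨n + 1, by omega⟩ = 0 := by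
    intro i; rw [hgn1]; have := i.isLt
    rw [if_neg (by simp; omega), if_neg (by simp; omega)]
  have hψn : ∀ l, ψ l ⟨n, by omega⟩ = if l = Sum.inr (Sum.inr 3) then 1 else 0 := by
    rintro (i | i | l)
    · simp only [hψ, Sum.elim_inl, hA, Pi.mul_apply, hval0, zero_mul]
      simp
    · simp only [hψ, Sum.elim_inr, Sum.elim_inl, hB, Pi.mul_apply, hvallow i, mul_zero]
      simp
    · fin_cases l
      · show D ⟨n, by omega⟩ = _
        simp only [hD, Pi.mul_apply, hval0, zero_mul]
        simp
      · show w ⟨n, by omega⟩ = _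
        simp only [hw, Pi.sub_apply, Pi.smul_apply, hq3, hq2, Pi.mul_apply, hvalK2, zero_mul,
          smul_eq_mul, mul_zero, sub_zero]
        simp
      · show q2 ⟨n, by omega⟩ = _
        simp only [hq2, Pi.mul_apply, hvalK2, zero_mul]
        simp
      · show q1 ⟨n, by omega⟩ = _
        simp only [hq1, Pi.mul_apply, hvalK1, one_mul]
        simp
  have hψn1 : ∀ l, ψ l ⟨n + 1, by omega⟩ =
      (if l = Sum.inr (Sum.inr 2) then 1 else 0)
        + (if l = Sum.inr (Sum.inr 3) then δ * δ else 0) := by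
    rintro (i | i | l)
    · show A i ⟨n + 1, by omega⟩ = _
      simp only [hA, Pi.mul_apply, hval0', zero_mul]
      simp
    · show B i ⟨n + 1, by omega⟩ = _
      simp only [hB, Pi.mul_apply, hvallow' i, mul_zero]
      simp
    · fin_cases l
      · show D ⟨n + 1, by omega⟩ = _
        simp only [hD, Pi.mul_apply, hval0', zero_mul]
        simp
      · show w ⟨n + 1, by omega⟩ = _
        simp only [hw, Pi.sub_apply, Pi.smul_apply, hq3, hq2, Pi.mul_apply, hvalK2', hvalK1',
          one_mul, smul_eq_mul, mul_one]
        simp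
      · show q2 ⟨n + 1, by omega⟩ = _
        simp only [hq2, Pi.mul_apply, hvalK2', one_mul]
        simp
      · show q1 ⟨n + 1, by omega⟩ = _
        simp only [hq1, Pi.mul_apply, hvalK1']
        simp
  have hψA : ∀ (i : Fin (k - 2)) (j : Fin n),
      ψ (Sum.inl i) ⟨(j : ℕ), by omega⟩ = α j ^ e i := by
    intro i j
    show (g ⟨0, hk0⟩ * g ⟨(i : ℕ), by omega⟩) ⟨(j : ℕ), by omega⟩ = α j ^ e i
    rw [Pi.mul_apply]
    simp only [hglt, hexpo0, pow_zero, one_mul, he]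
  have hψB : ∀ (i : Fin (k - 2)) (j : Fin n),
      ψ (Sum.inr (Sum.inl i)) ⟨(j : ℕ), by omega⟩ = α j ^ (k + e i) := by
    intro i j
    show (g ⟨k - 1, hkm1⟩ * g ⟨(i : ℕ), by omega⟩) ⟨(j : ℕ), by omega⟩ = α j ^ (k + e i)
    rw [Pi.mul_apply]
    simp only [hglt, hb, he, pow_add]
  have hψD : ∀ j : Fin n, ψ (Sum.inr (Sum.inr 0)) ⟨(j : ℕ), by omega⟩ = α j ^ a := by
    intro j
    show (g ⟨0, hk0⟩ * g ⟨k - 2, hkm2⟩) ⟨(j : ℕ), by omega⟩ = α j ^ a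
    rw [Pi.mul_apply]
    simp only [hglt, hexpo0, pow_zero, one_mul, ha]
  have hψw : ∀ j : Fin n, ψ (Sum.inr (Sum.inr 1)) ⟨(j : ℕ), by omega⟩
      = α j ^ (a + k) - δ * α j ^ (a + a) := by
    intro j
    show (q3 - δ • q2) ⟨(j : ℕ), by omega⟩ = _
    rw [Pi.sub_apply, Pi.smul_apply, hq3, hq2, Pi.mul_apply, Pi.mul_apply, smul_eq_mul]
    simp only [hglt, hb, ← ha, pow_add]
  have hψq2 : ∀ j : Fin n, ψ (Sum.inr (Sum.inr 2)) ⟨(j : ℕ), by omega⟩ = α j ^ (a + a) := by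
    intro j
    show (g ⟨k - 2, hkm2⟩ * g ⟨k - 2, hkm2⟩) ⟨(j : ℕ), by omega⟩ = _
    rw [Pi.mul_apply]
    simp only [hglt, ← ha, pow_add]
  have hψq1 : ∀ j : Fin n, ψ (Sum.inr (Sum.inr 3)) ⟨(j : ℕ), by omega⟩ = α j ^ (k + k) := by
    intro j
    show (g ⟨k - 1, hkm1⟩ * g ⟨k - 1, hkm1⟩) ⟨(j : ℕ), by omega⟩ = _
    rw [Pi.mul_apply]
    simp only [hglt, hb, pow_add]
  have hcard : Fintype.card (Fin (k - 2) ⊕ (Fin (k - 2) ⊕ Fin 4)) = 2 * k := by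
    simp only [Fintype.card_sum, Fintype.card_fin]
    omega
  have hind : LinearIndependent F ψ := by
    rw [Fintype.linearIndependent_iff]
    intro c hc
    have hcapp : ∀ jj : Fin (n + 2), ∑ l, c l * ψ l jj = 0 := by
      intro jj
      have h0 := congrFun hc jj
      rw [Finset.sum_apply] at h0
      simpa using h0
    have h1 : c (Sum.inr (Sum.inr 3)) = 0 := by
      have h0 := hcapp ⟨n, by omega⟩
      simp only [hψn, mul_ite, mul_one, mul_zero, Finset.sum_ite_eq', Finset.mem_univ,
        if_true] at h0
      exact h0
    have h2 : c (Sum.inr (Sum.inr 2)) = 0 := by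
      have h0 := hcapp ⟨n + 1, by omega⟩
      simp only [hψn1, mul_add, mul_ite, mul_one, mul_zero, Finset.sum_add_distrib,
        Finset.sum_ite_eq', Finset.mem_univ, if_true, h1, zero_mul, add_zero] at h0
      simpa using h0
    set p : Polynomial F :=
      (∑ i : Fin (k - 2), Polynomial.C (c (Sum.inl i)) * Polynomial.X ^ (e i))
      + (∑ i : Fin (k - 2), Polynomial.C (c (Sum.inr (Sum.inl i))) * Polynomial.X ^ (k + e i))
      + Polynomial.C (c (Sum.inr (Sum.inr 0))) * Polynomial.X ^ a
      + Polynomial.C (c (Sum.inr (Sum.inr 1)))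
          * (Polynomial.X ^ (a + k) - Polynomial.C δ * Polynomial.X ^ (a + a)) with hp
    have heval : ∀ j : Fin n, p.eval (α j) = 0 := by
      intro j
      have h0 := hcapp ⟨(j : ℕ), by omega⟩
      rw [Fintype.sum_sum_type, Fintype.sum_sum_type, Fin.sum_univ_four] at h0
      simp only [hψA, hψB, hψD, hψw, hψq2, hψq1, h1, h2, zero_mul, add_zero] at h0
      rw [hp]
      simp only [Polynomial.eval_add, Polynomial.eval_mul, Polynomial.eval_sub,
        Polynomial.eval_C, Polynomial.eval_pow, Polynomial.eval_X, Polynomial.eval_finset_sum]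
      linear_combination h0
    have hdeg : p.natDegree < n := by
      have hb1 : (∑ i : Fin (k - 2), Polynomial.C (c (Sum.inl i))
          * Polynomial.X ^ (e i)).natDegree ≤ 2 * k - 1 :=
        Polynomial.natDegree_sum_le_of_forall_le _ _ fun i _ =>
          le_trans (Polynomial.natDegree_C_mul_le _ _)
            (by rw [Polynomial.natDegree_X_pow]; have := heub i; omega)
      have hb2 : (∑ i : Fin (k - 2), Polynomial.C (c (Sum.inr (Sum.inl i)))
          * Polynomial.X ^ (k + e i)).natDegree ≤ 2 * k - 1 :=
        Polynomial.natDegree_sum_le_of_forall_le _ _ fun i _ =>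
          le_trans (Polynomial.natDegree_C_mul_le _ _)
            (by rw [Polynomial.natDegree_X_pow]; have := heub i; omega)
      have hb3 : (Polynomial.C (c (Sum.inr (Sum.inr 0)))
          * Polynomial.X ^ a).natDegree ≤ 2 * k - 1 :=
        le_trans (Polynomial.natDegree_C_mul_le _ _)
          (by rw [Polynomial.natDegree_X_pow]; omega)
      have hb4 : (Polynomial.C (c (Sum.inr (Sum.inr 1)))
          * (Polynomial.X ^ (a + k) - Polynomial.C δ * Polynomial.X ^ (a + a))).natDegree
          ≤ 2 * k - 1 := by
        refine le_trans (Polynomial.natDegree_C_mul_le _ _) ?_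
        refine le_trans (Polynomial.natDegree_sub_le _ _) ?_
        refine max_le (by rw [Polynomial.natDegree_X_pow]; omega) ?_
        refine le_trans (Polynomial.natDegree_C_mul_le _ _) ?_
        rw [Polynomial.natDegree_X_pow]; omega
      have : p.natDegree ≤ 2 * k - 1 := by
        rw [hp]
        refine le_trans (Polynomial.natDegree_add_le _ _) (max_le ?_ hb4)
        refine le_trans (Polynomial.natDegree_add_le _ _) (max_le ?_ hb3)
        exact le_trans (Polynomial.natDegree_add_le _ _) (max_le hb1 hb2)
      omega
    have hp0 : p = 0 :=
      Polynomial.eq_zero_of_natDegree_lt_card_of_eval_eq_zero p hα heval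
        (by rwa [Fintype.card_fin])
    have hco : ∀ t, p.coeff t = 0 := fun t => by rw [hp0, Polynomial.coeff_zero]
    have hcw0 : c (Sum.inr (Sum.inr 1)) = 0 := by
      have h4 := hco (a + k)
      rw [hp, Polynomial.coeff_add, Polynomial.coeff_add, Polynomial.coeff_add] at h4
      rw [coeff_aux _ _ _ (fun i => by have := heub i; omega)] at h4
      rw [coeff_aux _ _ _ (fun i => by have := hae i; omega)] at h4
      rw [Polynomial.coeff_C_mul, Polynomial.coeff_X_pow, if_neg (by omega), mul_zero] at h4
      rw [Polynomial.coeff_C_mul, Polynomial.coeff_sub, Polynomial.coeff_X_pow, if_pos rfl,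
        Polynomial.coeff_C_mul, Polynomial.coeff_X_pow, if_neg (by omega), mul_zero, sub_zero,
        mul_one] at h4
      simpa using h4
    have hcD0 : c (Sum.inr (Sum.inr 0)) = 0 := by
      have h4 := hco a
      rw [hp, Polynomial.coeff_add, Polynomial.coeff_add, Polynomial.coeff_add] at h4
      rw [hcw0, Polynomial.C_0, zero_mul, Polynomial.coeff_zero] at h4
      rw [coeff_aux _ _ _ (fun i => by have := hae i; omega)] at h4
      rw [coeff_aux _ _ _ (fun i => by have := hae i; omega)] at h4
      rw [Polynomial.coeff_C_mul, Polynomial.coeff_X_pow, if_pos rfl, mul_one] at h4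
      simpa using h4
    have hcA0 : ∀ i0 : Fin (k - 2), c (Sum.inl i0) = 0 := by
      intro i0
      have h4 := hco (e i0)
      rw [hp, Polynomial.coeff_add, Polynomial.coeff_add, Polynomial.coeff_add] at h4
      rw [hcw0, Polynomial.C_0, zero_mul, Polynomial.coeff_zero] at h4
      rw [coeff_aux2 _ _ i0 (fun i hi => heinj _ _ hi)] at h4
      rw [coeff_aux _ _ _ (fun i => by have := heub i0; omega)] at h4
      rw [Polynomial.coeff_C_mul, Polynomial.coeff_X_pow, if_neg (by have := hae i0; omega),
        mul_zero] at h4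
      simpa using h4
    have hcB0 : ∀ i0 : Fin (k - 2), c (Sum.inr (Sum.inl i0)) = 0 := by
      intro i0
      have h4 := hco (k + e i0)
      rw [hp, Polynomial.coeff_add, Polynomial.coeff_add, Polynomial.coeff_add] at h4
      rw [hcw0, Polynomial.C_0, zero_mul, Polynomial.coeff_zero] at h4
      rw [coeff_aux _ _ _ (fun i => by have := heub i; omega)] at h4
      rw [coeff_aux2 _ _ i0 (fun i hi => heinj _ _ (by omega))] at h4
      rw [Polynomial.coeff_C_mul, Polynomial.coeff_X_pow, if_neg (by omega), mul_zero] at h4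
      simpa using h4
    rintro (i | i | l)
    · exact hcA0 i
    · exact hcB0 i
    · fin_cases l
      · exact hcD0
      · exact hcw0
      · exact h2
      · exact h1
  refine le_trans ?_ (Submodule.finrank_mono (Submodule.span_le.2 (Set.range_subset_iff.2 hmem)))
  rw [finrank_span_eq_card hind, hcard]


end C2Aux

/-- Theorem 5.7: if the code `C_2` generated by `G_2` is MDS, then it is not monomially
equivalent to any GRS code of length `n+2` over `F`. -/
theorem C2_nonGRS {F : Type*} [Field F] [Fintype F] {n : ℕ}
    (α : Fin n → F) (hα : Function.Injective α) (δ : F) (k r : ℕ)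
    (h6 : 6 ≤ 2 * k) (hkn : 2 * k ≤ n) (hr1 : 1 ≤ r) (hrk : r ≤ k - 1)
    (hMDS : allSubNonsing (G2 α k r δ)) :
    ∀ (kk : ℕ), 2 ≤ kk → kk ≤ n + 2 → ∀ C' : Set (Fin (n + 2) → F),
      isGRS (n + 2) kk C' →
      ¬ monEquiv (rowSpan (G2 α k r δ) : Set (Fin (n + 2) → F)) C' := by
  intro kk hkk2 hkkn C' hGRS hmon
  have hk3 : 3 ≤ k := by omega
  by_cases hcase : kk ≤ k
  · have h1 := schur_lb α hα δ k r hk3 hkn hr1 hrk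
    have h2 := grs_ub hkk2 hGRS
    have h3 := schur_mon hmon
    rw [h3] at h1
    have h4 := le_trans h1 h2
    omega
  · obtain ⟨ct, hmem, hind⟩ := exists_indep_grs hkk2 hkkn hGRS
    obtain ⟨π, lam, hlam, hC'⟩ := hmon
    let Φ : (Fin (n + 2) → F) →ₗ[F] (Fin (n + 2) → F) :=
      { toFun := fun x i => lam i * x (π i)
        map_add' := fun x y => by funext i; simp [mul_add]
        map_smul' := fun t x => by funext i; simp [smul_eq_mul]; ring }
    have hsub : Set.range ct ⊆ (Submodule.map Φ (rowSpan (G2 α k r δ)) : Set (Fin (n + 2) → F)) := by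
      rintro y ⟨t, rfl⟩
      have hy := hmem t
      rw [hC'] at hy
      obtain ⟨c, hc, hcs⟩ := hy
      exact ⟨c, hc, by funext i; exact (hcs i).symm⟩
    have h4 : kk ≤ Module.finrank F (Submodule.map Φ (rowSpan (G2 α k r δ))) := by
      have e1 : kk = Fintype.card (Fin kk) := by simp
      rw [e1, ← finrank_span_eq_card hind]
      exact Submodule.finrank_mono (Submodule.span_le.2 hsub)
    have h5 : Module.finrank F (Submodule.map Φ (rowSpan (G2 α k r δ))) ≤ k := by
      refine le_trans (Submodule.finrank_map_le Φ _) ?_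
      unfold rowSpan
      exact finrank_span_range_le_card _
    omega
end

section
/- Let q = 2^m for a positive integer m, let F_q be the finite field with q elements, and let h ≥ 2 be an integer with gcd(h, q−1) = 1. Then any three pairwise distinct vectors in the set D = {(1, x, x^h) : x ∈ F_q} ∪ {(0,1,0), (0,0,1)} ⊆ F_q³ are linearly independent over F_q (i.e. D is a hyperoval, equivalently the 3×(q+2) matrix with these vectors as columns generates an MDS code) if and only if S_{h−2}(a, b, c) ≠ 0 for all pairwise distinct a, b, c ∈ F_q. -/
open Finset Matrix

/-- The point set `D(x^h) = {(1, x, x^h) : x ∈ F} ∪ {(0,1,0), (0,0,1)}`. -/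
def Dset {F : Type*} [Field F] (h : ℕ) : Set (Fin 3 → F) :=
  {w | ∃ t : F, w = ![1, t, t ^ h]} ∪ {![0, 1, 0], ![0, 0, 1]}

/-! ### Auxiliary lemmas -/

/-- Two-variable complete homogeneous sum `∑_{i+j=t} b^i c^j`. -/
def gsum {F : Type*} [CommRing F] (b c : F) (t : ℕ) : F :=
  ∑ q ∈ Finset.HasAntidiagonal.antidiagonal t, b ^ q.1 * c ^ q.2

lemma gsum_succ {F : Type*} [CommRing F] (b c : F) (t : ℕ) :
    gsum b c (t+1) = c ^ (t+1) + b * gsum b c t := by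
  unfold gsum
  rw [Finset.Nat.antidiagonal_succ, Finset.sum_cons, Finset.sum_map]
  simp [Finset.mul_sum, pow_succ, mul_comm, mul_assoc, mul_left_comm]

lemma gsum_mul {F : Type*} [CommRing F] (b c : F) (t : ℕ) :
    (b - c) * gsum b c t = b ^ (t+1) - c ^ (t+1) := by
  induction t with
  | zero => simp [gsum]
  | succ t ih => rw [gsum_succ]; linear_combination b * ih

/-- Three-variable complete homogeneous sum, written as a nested sum. -/
def hsum {F : Type*} [CommRing F] (a b c : F) (t : ℕ) : F :=
  ∑ p ∈ Finset.HasAntidiagonal.antidiagonal t, a ^ p.1 * gsum b c p.2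

lemma hsum_succ {F : Type*} [CommRing F] (a b c : F) (t : ℕ) :
    hsum a b c (t+1) = gsum b c (t+1) + a * hsum a b c t := by
  unfold hsum
  rw [Finset.Nat.antidiagonal_succ, Finset.sum_cons, Finset.sum_map]
  simp [Finset.mul_sum, pow_succ, mul_comm, mul_assoc, mul_left_comm]

lemma hsum_mul {F : Type*} [CommRing F] (a b c : F) (t : ℕ) :
    (a-b)*(a-c)*(b-c) * hsum a b c t
      = a^(t+2)*(b-c) - b^(t+2)*(a-c) + c^(t+2)*(a-b) := by
  induction t with
  | zero => simp [hsum, gsum]; ring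
  | succ t ih =>
    rw [hsum_succ]
    linear_combination ((a-b)*(a-c)) * gsum_mul b c (t+1) + a * ih

lemma hsymmV_three {F : Type*} [CommRing F] (a b c : F) (t : ℕ) :
    hsymmV t ![a,b,c] = hsum a b c t := by
  unfold hsymmV hsum gsum
  simp_rw [Finset.mul_sum, Finset.sum_sigma']
  refine Finset.sum_nbij' (i := fun d => ⟨(d 0, d 1 + d 2), (d 1, d 2)⟩)
    (j := fun p => ![p.1.1, p.2.1, p.2.2]) ?_ ?_ ?_ ?_ ?_
  · intro d hd
    rw [Finset.Nat.mem_antidiagonalTuple, Fin.sum_univ_three] at hd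
    simp only [Finset.mem_sigma, Finset.HasAntidiagonal.mem_antidiagonal]
    exact ⟨by rw [← add_assoc]; exact hd, trivial⟩
  · rintro ⟨⟨i, s⟩, ⟨j, k⟩⟩ hp
    simp only [Finset.mem_sigma, Finset.HasAntidiagonal.mem_antidiagonal] at hp
    rw [Finset.Nat.mem_antidiagonalTuple, Fin.sum_univ_three]
    simp
    omega
  · intro d hd
    funext i
    fin_cases i <;> rfl
  · rintro ⟨⟨i, s⟩, ⟨j, k⟩⟩ hp
    simp only [Finset.mem_sigma, Finset.HasAntidiagonal.mem_antidiagonal] at hp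
    obtain ⟨h1, h2⟩ := hp
    subst h2
    simp
  · intro d hd
    rw [Fin.prod_univ_three]
    simp [mul_assoc]

lemma det_aff {F : Type*} [CommRing F] (a b c : F) (t : ℕ) :
    (Matrix.of ![![1,a,a^(t+2)],![1,b,b^(t+2)],![1,c,c^(t+2)]]).det
      = -((a-b)*(a-c)*(b-c) * hsymmV t ![a,b,c]) := by
  rw [hsymmV_three, Matrix.det_fin_three]
  simp only [Matrix.of_apply, Matrix.cons_val', Matrix.cons_val_zero, Matrix.cons_val_one,
    Matrix.head_cons, Matrix.cons_val_two, Matrix.tail_cons, Matrix.head_fin_const,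
    Matrix.empty_val', Matrix.cons_val_fin_one]
  linear_combination hsum_mul a b c t

lemma li_iff_det {F : Type*} [Field F] (x y z : Fin 3 → F) :
    LinearIndependent F ![x, y, z] ↔ (Matrix.of ![x, y, z]).det ≠ 0 := by
  rw [← isUnit_iff_ne_zero, ← Matrix.isUnit_iff_isUnit_det]
  exact Matrix.linearIndependent_rows_iff_isUnit

lemma li_swap01 {F : Type*} [Field F] {x y z : Fin 3 → F}
    (h : LinearIndependent F ![y, x, z]) : LinearIndependent F ![x, y, z] := by
  have he : (![x,y,z] : Fin 3 → Fin 3 → F) = ![y,x,z] ∘ (Equiv.swap (0:Fin 3) 1) := by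
    funext i; fin_cases i <;> simp [Equiv.swap_apply_def]
  rw [he]; exact (linearIndependent_equiv _).mpr h

lemma li_swap02 {F : Type*} [Field F] {x y z : Fin 3 → F}
    (h : LinearIndependent F ![z, y, x]) : LinearIndependent F ![x, y, z] := by
  have he : (![x,y,z] : Fin 3 → Fin 3 → F) = ![z,y,x] ∘ (Equiv.swap (0:Fin 3) 2) := by
    funext i; fin_cases i <;> simp [Equiv.swap_apply_def]
  rw [he]; exact (linearIndependent_equiv _).mpr h

lemma li_swap12 {F : Type*} [Field F] {x y z : Fin 3 → F}
    (h : LinearIndependent F ![x, z, y]) : LinearIndependent F ![x, y, z] := by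
  have he : (![x,y,z] : Fin 3 → Fin 3 → F) = ![x,z,y] ∘ (Equiv.swap (1:Fin 3) 2) := by
    funext i; fin_cases i <;> simp [Equiv.swap_apply_def]
  rw [he]; exact (linearIndependent_equiv _).mpr h

lemma li_rot {F : Type*} [Field F] {x y z : Fin 3 → F}
    (h : LinearIndependent F ![y, z, x]) : LinearIndependent F ![x, y, z] :=
  li_swap01 (li_swap12 h)

lemma li_rot' {F : Type*} [Field F] {x y z : Fin 3 → F}
    (h : LinearIndependent F ![z, x, y]) : LinearIndependent F ![x, y, z] :=
  li_rot (li_rot h)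

/-- Theorem 6.4: for `q = 2^m` and `gcd(h, q−1) = 1`, the monomial `x^h` is an
`o`-polynomial (i.e. `D(x^h)` is a hyperoval: any three pairwise distinct vectors of
`D(x^h)` are linearly independent) iff `S_{h−2}(a,b,c) ≠ 0` for all pairwise
distinct `a, b, c ∈ F_q`. -/
theorem oMonomial_iff_hsymm {F : Type*} [Field F] [Fintype F] (m : ℕ) (hm : 1 ≤ m)
    (hcard : Fintype.card F = 2 ^ m) (h : ℕ) (hh : 2 ≤ h)
    (hgcd : Nat.gcd h (2 ^ m - 1) = 1) :
    (∀ x y z : Fin 3 → F, x ∈ Dset (F := F) h → y ∈ Dset (F := F) h → z ∈ Dset (F := F) h →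
        x ≠ y → x ≠ z → y ≠ z → LinearIndependent F ![x, y, z]) ↔
      (∀ a b c : F, a ≠ b → a ≠ c → b ≠ c → hsymmV (h - 2) ![a, b, c] ≠ 0) := by
  classical
  obtain ⟨t, rfl⟩ : ∃ t, h = t + 2 := ⟨h - 2, by omega⟩
  have ht2 : t + 2 - 2 = t := by omega
  rw [ht2]
  have hco : (Nat.card Fˣ).Coprime (t + 2) := by
    rw [Nat.card_eq_fintype_card, Fintype.card_units, hcard]
    exact Nat.Coprime.symm hgcd
  have hinj : Function.Injective fun x : F => x ^ (t + 2) := by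
    intro x y hxy
    simp only at hxy
    rcases eq_or_ne x 0 with rfl | hx0
    · have hy0 : y ^ (t+2) = 0 := by rw [← hxy]; exact zero_pow (by omega)
      exact ((pow_eq_zero_iff (by omega : t + 2 ≠ 0)).mp hy0).symm
    · rcases eq_or_ne y 0 with rfl | hy0
      · exact (pow_eq_zero_iff (by omega : t + 2 ≠ 0)).mp
          (by rw [hxy]; exact zero_pow (by omega))
      · have hu : Units.mk0 x hx0 ^ (t+2) = Units.mk0 y hy0 ^ (t+2) :=
          Units.ext (by simpa using hxy)
        have := hco.pow_left_bijective.injective hu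
        simpa using congrArg Units.val this
  constructor
  · intro H a b c hab hac hbc
    have li := H ![1,a,a^(t+2)] ![1,b,b^(t+2)] ![1,c,c^(t+2)]
      (by simp only [Dset]; exact Set.mem_union_left _ ⟨a, rfl⟩)
      (by simp only [Dset]; exact Set.mem_union_left _ ⟨b, rfl⟩)
      (by simp only [Dset]; exact Set.mem_union_left _ ⟨c, rfl⟩)
      (fun e => hab (by simpa using congrFun e 1))
      (fun e => hac (by simpa using congrFun e 1))
      (fun e => hbc (by simpa using congrFun e 1))
    rw [li_iff_det, det_aff] at li
    intro h0
    apply li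
    rw [h0, mul_zero, neg_zero]
  · intro hS x y z hx hy hz hxy hxz hyz
    have cAAA : ∀ a b c : F, a ≠ b → a ≠ c → b ≠ c →
        LinearIndependent F ![![1,a,a^(t+2)], ![1,b,b^(t+2)], ![1,c,c^(t+2)]] := by
      intro a b c hab hac hbc
      rw [li_iff_det, det_aff, neg_ne_zero]
      exact mul_ne_zero (mul_ne_zero (mul_ne_zero (sub_ne_zero_of_ne hab)
        (sub_ne_zero_of_ne hac)) (sub_ne_zero_of_ne hbc)) (hS a b c hab hac hbc)
    have cAAP : ∀ a b : F, a ≠ b →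
        LinearIndependent F ![![1,a,a^(t+2)], ![1,b,b^(t+2)], ![0,1,0]] := by
      intro a b hab
      rw [li_iff_det]
      have hd : (Matrix.of ![![1,a,a^(t+2)], ![1,b,b^(t+2)], ![(0:F),1,0]]).det
          = a^(t+2) - b^(t+2) := by
        rw [Matrix.det_fin_three]
        simp
        ring
      rw [hd]
      exact sub_ne_zero_of_ne fun e => hab (hinj e)
    have cAAQ : ∀ a b : F, a ≠ b →
        LinearIndependent F ![![1,a,a^(t+2)], ![1,b,b^(t+2)], ![0,0,1]] := by
      intro a b hab
      rw [li_iff_det]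
      have hd : (Matrix.of ![![1,a,a^(t+2)], ![1,b,b^(t+2)], ![(0:F),0,1]]).det
          = b - a := by
        rw [Matrix.det_fin_three]
        simp
      rw [hd]
      exact sub_ne_zero_of_ne hab.symm
    have cAPQ : ∀ a : F,
        LinearIndependent F ![![1,a,a^(t+2)], ![0,1,0], ![0,0,1]] := by
      intro a
      rw [li_iff_det]
      have hd : (Matrix.of ![![1,a,a^(t+2)], ![(0:F),1,0], ![(0:F),0,1]]).det = 1 := by
        rw [Matrix.det_fin_three]
        simp [Matrix.vecHead, Matrix.vecTail]
      rw [hd]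
      exact one_ne_zero
    have hne : ∀ u v : F, (![1,u,u^(t+2)] : Fin 3 → F) ≠ ![1,v,v^(t+2)] → u ≠ v :=
      fun u v huv e => huv (by rw [e])
    simp only [Dset, Set.mem_union, Set.mem_setOf_eq, Set.mem_insert_iff,
      Set.mem_singleton_iff] at hx hy hz
    rcases hx with ⟨a, rfl⟩ | rfl | rfl <;> rcases hy with ⟨b, rfl⟩ | rfl | rfl <;>
      rcases hz with ⟨c, rfl⟩ | rfl | rfl
    · exact cAAA a b c (hne _ _ hxy) (hne _ _ hxz) (hne _ _ hyz)
    · exact cAAP a b (hne _ _ hxy)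
    · exact cAAQ a b (hne _ _ hxy)
    · exact li_swap12 (cAAP a c (hne _ _ hxz))
    · exact absurd rfl hyz
    · exact cAPQ a
    · exact li_swap12 (cAAQ a c (hne _ _ hxz))
    · exact li_swap12 (cAPQ a)
    · exact absurd rfl hyz
    · exact li_rot (cAAP b c (hne _ _ hyz))
    · exact absurd rfl hxz
    · exact li_swap01 (cAPQ b)
    · exact absurd rfl hxy
    · exact absurd rfl hxy
    · exact absurd rfl hxy
    · exact li_rot' (cAPQ c)
    · exact absurd rfl hxz
    · exact absurd rfl hyz
    · exact li_rot (cAAQ b c (hne _ _ hyz))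
    · exact li_rot (cAPQ b)
    · exact absurd rfl hxz
    · exact li_swap02 (cAPQ c)
    · exact absurd rfl hyz
    · exact absurd rfl hxz
    · exact absurd rfl hxy
    · exact absurd rfl hxy
    · exact absurd rfl hxy
end
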